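/- Let X be a finite ground set, let 𝒯 be a finite family of subsets of X such that every element of X belongs to at least one member of 𝒯, and let G be the incidence bipartite graph of (X, 𝒯) with thresholds τ(x) = 1 for x ∈ X and τ(T) = |T| for T ∈ 𝒯. Then the minimum cardinality of a target set of G equals the minimum cardinality of a set cover 𝒮 ⊆ 𝒯 of (X, 𝒯). -/

import Mathlib

open scoped Classical

/-- The neighborhood of `u` in `G`, as a finset. -/
noncomputable def nbrs {V : Type*} [Fintype V] (G : SimpleGraph V) (u : V) : Finset V :=
  Finset.univ.filter (fun w => G.Adj u w)

/-- The diffusion process: `diffusion G τ S i` is the set `A[S,i]` of vertices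
active after `i` rounds starting from seed set `S`. -/
noncomputable def diffusion {V : Type*} [Fintype V] (G : SimpleGraph V) (τ : V → ℕ)
    (S : Finset V) : ℕ → Finset V
  | 0 => S
  | (i + 1) => diffusion G τ S i ∪
      Finset.univ.filter (fun u => τ u ≤ (nbrs G u ∩ diffusion G τ S i).card)

/-- The influence of a seed set `S`: all vertices eventually activated. -/
def influence {V : Type*} [Fintype V] (G : SimpleGraph V) (τ : V → ℕ) (S : Finset V) : Set V :=
  {v | ∃ i, v ∈ diffusion G τ S i}

/-- `S` is a target set if its influence is the whole vertex set. -/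
def isTargetSet {V : Type*} [Fintype V] (G : SimpleGraph V) (τ : V → ℕ) (S : Finset V) : Prop :=
  influence G τ S = Set.univ

/-- `C` is a vertex cover of `G`. -/
def isVertexCover {V : Type*} [Fintype V] (G : SimpleGraph V) (C : Finset V) : Prop :=
  ∀ u v, G.Adj u v → u ∈ C ∨ v ∈ C

/-- The incidence bipartite graph of a set system `(X, 𝒯)`: its vertices are the
elements of the ground type together with the members of `𝒯`, and `x` is adjacent
to `T` iff `x ∈ T`. -/
def incGraph {α : Type*} (𝒯 : Finset (Finset α)) :
    SimpleGraph (α ⊕ {T : Finset α // T ∈ 𝒯}) where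
  Adj u w :=
    (∃ (x : α) (T : {T : Finset α // T ∈ 𝒯}), u = Sum.inl x ∧ w = Sum.inr T ∧ x ∈ T.1) ∨
    (∃ (x : α) (T : {T : Finset α // T ∈ 𝒯}), w = Sum.inl x ∧ u = Sum.inr T ∧ x ∈ T.1)
  symm := by
    refine ⟨?_⟩
    rintro u w (⟨x, T, h1, h2, h3⟩ | ⟨x, T, h1, h2, h3⟩)
    · exact Or.inr ⟨x, T, h1, h2, h3⟩
    · exact Or.inl ⟨x, T, h1, h2, h3⟩
  loopless := by
    refine ⟨?_⟩
    rintro u (⟨x, T, h1, h2, -⟩ | ⟨x, T, h1, h2, -⟩) <;> rw [h1] at h2 <;> exact Sum.inl_ne_inr h2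

/-- The threshold function of the incidence graph: `1` on ground elements and
`|T|` on set vertices. -/
def incThreshold {α : Type*} (𝒯 : Finset (Finset α)) : α ⊕ {T : Finset α // T ∈ 𝒯} → ℕ :=
  Sum.elim (fun _ => 1) (fun T => T.1.card)

section Aux

lemma mem_nbrs {V : Type*} [Fintype V] (G : SimpleGraph V) {u w : V} :
    w ∈ nbrs G u ↔ G.Adj u w := by simp [nbrs]

lemma mem_diffusion_succ {V : Type*} [Fintype V] {G : SimpleGraph V} {τ : V → ℕ}
    {S : Finset V} {i : ℕ} {u : V} :
    u ∈ diffusion G τ S (i + 1) ↔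
      u ∈ diffusion G τ S i ∨ τ u ≤ (nbrs G u ∩ diffusion G τ S i).card := by
  simp [diffusion, Finset.mem_union, Finset.mem_filter]


lemma mem_inter_left' {V : Type*} {s t : Finset V} {w : V} (h : w ∈ s ∩ t) : w ∈ s :=
  (Finset.mem_inter.mp h).1

lemma mem_inter_right' {V : Type*} {s t : Finset V} {w : V} (h : w ∈ s ∩ t) : w ∈ t :=
  (Finset.mem_inter.mp h).2

lemma inter_eq_left_of_card_le' {V : Type*} {s t : Finset V} (h : s.card ≤ (s ∩ t).card) :
    s ∩ t = s :=
  Finset.eq_of_subset_of_card_le Finset.inter_subset_left h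

lemma mem_inter_intro' {V : Type*} {s t : Finset V} {w : V} (h1 : w ∈ s) (h2 : w ∈ t) :
    w ∈ s ∩ t := Finset.mem_inter.mpr ⟨h1, h2⟩

variable {α : Type*} {𝒯 : Finset (Finset α)}

lemma adj_inl_iff {x : α} {w : α ⊕ {T : Finset α // T ∈ 𝒯}} :
    (incGraph 𝒯).Adj (Sum.inl x) w ↔
      ∃ T : {T : Finset α // T ∈ 𝒯}, w = Sum.inr T ∧ x ∈ T.1 := by
  constructor
  · rintro (⟨x', T, h1, h2, h3⟩ | ⟨x', T, h1, h2, h3⟩)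
    · injection h1 with h; subst h; exact ⟨T, h2, h3⟩
    · exact absurd h2 (by simp)
  · rintro ⟨T, rfl, h3⟩
    exact Or.inl ⟨x, T, rfl, rfl, h3⟩

lemma nbrs_inr [Fintype α] (T : {T : Finset α // T ∈ 𝒯}) :
    nbrs (incGraph 𝒯) (Sum.inr T) = T.1.image Sum.inl := by
  ext w
  simp only [mem_nbrs, Finset.mem_image]
  constructor
  · rintro (⟨x', T', h1, h2, h3⟩ | ⟨x', T', h1, h2, h3⟩)
    · exact absurd h1 (by simp)
    · injection h2 with h; subst h; exact ⟨x', h3, h1.symm⟩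
  · rintro ⟨x, hx, rfl⟩
    exact Or.inr ⟨x, T, rfl, rfl, hx⟩

/-- Key structural lemma: any activated ground vertex is either seeded or covered
by a seeded set vertex. -/
lemma key [Fintype α] (S : Finset (α ⊕ {T : Finset α // T ∈ 𝒯})) (i : ℕ) :
    (∀ x : α, Sum.inl x ∈ diffusion (incGraph 𝒯) (incThreshold 𝒯) S i →
      Sum.inl x ∈ S ∨ ∃ T : {T : Finset α // T ∈ 𝒯}, x ∈ T.1 ∧ Sum.inr T ∈ S) ∧
    (∀ (T : {T : Finset α // T ∈ 𝒯}) (x : α), x ∈ T.1 →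
      Sum.inr T ∈ diffusion (incGraph 𝒯) (incThreshold 𝒯) S i →
      Sum.inr T ∈ S ∨ Sum.inl x ∈ S ∨
        ∃ T' : {T : Finset α // T ∈ 𝒯}, x ∈ T'.1 ∧ Sum.inr T' ∈ S) := by
  induction i with
  | zero =>
    constructor
    · exact fun x hx => Or.inl hx
    · exact fun T x _ hT => Or.inl hT
  | succ i ih =>
    obtain ⟨ih1, ih2⟩ := ih
    constructor
    · intro x hx
      rcases mem_diffusion_succ.mp hx with hx | hx
      · exact ih1 x hx
      · have h2 : 0 < _ := hx
        obtain ⟨w, hw⟩ := Finset.card_pos.mp h2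
        have hw1 := mem_inter_left' hw
        have hw2 := mem_inter_right' hw
        rw [mem_nbrs, adj_inl_iff] at hw1
        obtain ⟨T, rfl, hxT⟩ := hw1
        rcases ih2 T x hxT hw2 with h | h | h
        · exact Or.inr ⟨T, hxT, h⟩
        · exact Or.inl h
        · exact Or.inr h
    · intro T x hxT hT
      rcases mem_diffusion_succ.mp hT with hT | hT
      · exact ih2 T x hxT hT
      · have h2 : T.1.card ≤ _ := hT
        have hcardnb : (nbrs (incGraph 𝒯) (Sum.inr T)).card = T.1.card := by
          rw [nbrs_inr, Finset.card_image_of_injective _ Sum.inl_injective]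
        rw [← hcardnb] at h2
        have heq := inter_eq_left_of_card_le' h2
        have hnb : (Sum.inl x : α ⊕ {T : Finset α // T ∈ 𝒯}) ∈
            nbrs (incGraph 𝒯) (Sum.inr T) := by
          rw [nbrs_inr]; exact Finset.mem_image_of_mem _ hxT
        have hnb' := heq.symm ▸ hnb
        have hxmem := mem_inter_right' hnb'
        rcases ih1 x hxmem with h | h
        · exact Or.inr (Or.inl h)
        · exact Or.inr (Or.inr h)

end Aux

/-- The minimum cardinality of a target set of the incidence graph of `(X, 𝒯)`
equals the minimum cardinality of a set cover of `(X, 𝒯)`. -/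
theorem minTargetSet_eq_minSetCover {α : Type*} [Fintype α] (𝒯 : Finset (Finset α))
    (hX : ∀ x : α, ∃ T ∈ 𝒯, x ∈ T) :
    sInf {k : ℕ | ∃ S : Finset (α ⊕ {T : Finset α // T ∈ 𝒯}),
        isTargetSet (incGraph 𝒯) (incThreshold 𝒯) S ∧ S.card = k} =
      sInf {k : ℕ | ∃ 𝒮 : Finset (Finset α),
        𝒮 ⊆ 𝒯 ∧ (∀ x : α, ∃ T ∈ 𝒮, x ∈ T) ∧ 𝒮.card = k} := by
  have hBne : {k : ℕ | ∃ 𝒮 : Finset (Finset α),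
      𝒮 ⊆ 𝒯 ∧ (∀ x : α, ∃ T ∈ 𝒮, x ∈ T) ∧ 𝒮.card = k}.Nonempty :=
    ⟨𝒯.card, 𝒯, subset_rfl, hX, rfl⟩
  have hAne : {k : ℕ | ∃ S : Finset (α ⊕ {T : Finset α // T ∈ 𝒯}),
      isTargetSet (incGraph 𝒯) (incThreshold 𝒯) S ∧ S.card = k}.Nonempty := by
    refine ⟨Finset.univ.card, Finset.univ, ?_, rfl⟩
    rw [isTargetSet, Set.eq_univ_iff_forall]
    exact fun v => ⟨0, Finset.mem_univ v⟩
  apply le_antisymm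
  · -- min target ≤ min cover
    obtain ⟨𝒮, hsub, hcov, hcard⟩ := Nat.sInf_mem hBne
    set S : Finset (α ⊕ {T : Finset α // T ∈ 𝒯}) :=
      𝒮.attach.image (fun T => Sum.inr ⟨T.1, hsub T.2⟩) with hSdef
    have step1 : ∀ x : α, Sum.inl x ∈ diffusion (incGraph 𝒯) (incThreshold 𝒯) S 1 := by
      intro x
      obtain ⟨T, hT𝒮, hxT⟩ := hcov x
      apply mem_diffusion_succ.mpr
      right
      have hmemS : (Sum.inr ⟨T, hsub hT𝒮⟩ : α ⊕ {T : Finset α // T ∈ 𝒯}) ∈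
          diffusion (incGraph 𝒯) (incThreshold 𝒯) S 0 := by
        show _ ∈ S
        rw [hSdef]
        exact Finset.mem_image.mpr ⟨⟨T, hT𝒮⟩, Finset.mem_attach _ _, rfl⟩
      have hmemN : (Sum.inr ⟨T, hsub hT𝒮⟩ : α ⊕ {T : Finset α // T ∈ 𝒯}) ∈
          nbrs (incGraph 𝒯) (Sum.inl x) := by
        rw [mem_nbrs, adj_inl_iff]
        exact ⟨⟨T, hsub hT𝒮⟩, rfl, hxT⟩
      have hpos := Finset.card_pos.mpr ⟨_, mem_inter_intro' hmemN hmemS⟩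
      rw [show incThreshold 𝒯 (Sum.inl x) = 1 from rfl]
      exact hpos
    apply Nat.sInf_le
    refine ⟨S, ?_, ?_⟩
    · rw [isTargetSet, Set.eq_univ_iff_forall]
      rintro (x | T)
      · exact ⟨1, step1 x⟩
      · refine ⟨2, ?_⟩
        apply mem_diffusion_succ.mpr
        right
        show T.1.card ≤ _
        have hcardnb : (nbrs (incGraph 𝒯) (Sum.inr T)).card = T.1.card := by
          rw [nbrs_inr, Finset.card_image_of_injective _ Sum.inl_injective]
        rw [← hcardnb]
        apply Finset.card_le_card
        intro w hw
        have hw0 := hw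
        rw [nbrs_inr] at hw
        obtain ⟨x, hx, rfl⟩ := Finset.mem_image.mp hw
        exact mem_inter_intro' hw0 (step1 x)
    · rw [hSdef, ← hcard, Finset.card_image_of_injective, Finset.card_attach]
      intro a b h
      simp only [Sum.inr.injEq, Subtype.mk.injEq] at h
      exact Subtype.ext h
  · -- min cover ≤ min target
    obtain ⟨S, hS, hcard⟩ := Nat.sInf_mem hAne
    choose f hf1 hf2 using hX
    set g : (α ⊕ {T : Finset α // T ∈ 𝒯}) → Finset α := Sum.elim f (fun T => T.1) with hgdef
    have h1 : sInf {k : ℕ | ∃ 𝒮 : Finset (Finset α),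
        𝒮 ⊆ 𝒯 ∧ (∀ x : α, ∃ T ∈ 𝒮, x ∈ T) ∧ 𝒮.card = k} ≤ (S.image g).card := by
      apply Nat.sInf_le
      refine ⟨S.image g, ?_, ?_, rfl⟩
      · intro U hU
        obtain ⟨v, _, rfl⟩ := Finset.mem_image.mp hU
        cases v with
        | inl x => exact hf1 x
        | inr T => exact T.2
      · intro x
        have hx : Sum.inl x ∈ influence (incGraph 𝒯) (incThreshold 𝒯) S := by
          rw [hS]; trivial
        obtain ⟨i, hi⟩ := hx
        rcases (key S i).1 x hi with h | ⟨T, hxT, hT⟩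
        · exact ⟨f x, Finset.mem_image_of_mem g h, hf2 x⟩
        · exact ⟨T.1, Finset.mem_image_of_mem g hT, hxT⟩
    exact h1.trans (by rw [← hcard]; exact Finset.card_image_le)
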